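/- Let (s_j : A_{j+1} → A_j)_{j≥0} be a sequence of continuous maps and F = ∪_j (mapping cylinder of s_j) the infinite telescope, glued end to end. If A_0 is a single point, then F is contractible. -/

import Mathlib

open Set

variable {A : ℕ → Type*} [∀ j, TopologicalSpace (A j)]

/-- The gluing relation of the infinite telescope of the maps `s_j : A_{j+1} → A_j`. -/
def telRel (s : ∀ j, A (j + 1) → A j) :
    (Σ j, A j × unitInterval) → (Σ j, A j × unitInterval) → Prop :=
  fun a b => ∃ j x, a = ⟨j + 1, (x, 1)⟩ ∧ b = ⟨j, (s j x, 0)⟩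

/-- The infinite telescope `F = ∪_j Cyl(s_j)`, glued end to end. -/
def Telescope (s : ∀ j, A (j + 1) → A j) : Type _ := Quot (telRel s)

instance (s : ∀ j, A (j + 1) → A j) : TopologicalSpace (Telescope s) :=
  inferInstanceAs (TopologicalSpace (Quot (telRel s)))

namespace TelescopeAux

variable (s : ∀ j, C(A (j + 1), A j))

/-- `g j x r` is the point at "height" `min r (j+1)` on the descent ray through the
fiber point `x ∈ A j` of the `j`-th cylinder. -/
noncomputable def g : ∀ j, A j → ℝ → Telescope (fun j => ⇑(s j))
  | 0, x, r => Quot.mk _ ⟨0, (x, projIcc 0 1 zero_le_one (1 - r))⟩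
  | (j+1), x, r =>
      if r ≤ (j + 1 : ℝ) then g j (s j x) r
      else Quot.mk _ ⟨j + 1, (x, projIcc 0 1 zero_le_one ((j + 2 : ℝ) - r))⟩

lemma g_eq (j : ℕ) (x : A j) (r : ℝ) (hr1 : (j : ℝ) ≤ r) (hr2 : r ≤ (j : ℝ) + 1) :
    g s j x r = Quot.mk _ ⟨j, (x, projIcc 0 1 zero_le_one ((j : ℝ) + 1 - r))⟩ := by
  induction j with
  | zero => simp [g]; rfl
  | succ j ih =>
    by_cases h : r ≤ (j + 1 : ℝ)
    · have hr : r = (j + 1 : ℝ) := le_antisymm h (by push_cast at hr1; linarith)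
      have h1 : g s (j + 1) x r = g s j (s j x) r := by
        simp only [g]
        exact if_pos h
      rw [h1, ih (s j x) (by push_cast at hr1; linarith) h, hr]
      have e0 : projIcc 0 1 zero_le_one ((j : ℝ) + 1 - ((j : ℝ) + 1)) = (0 : unitInterval) := by
        simp [projIcc]
      have e1 : projIcc 0 1 zero_le_one (((j : ℕ) + 1 : ℕ) + 1 - ((j : ℝ) + 1)) =
          (1 : unitInterval) := by
        push_cast
        norm_num [projIcc]
      rw [e0]
      push_cast
      have : ((j:ℝ) + 1 + 1 - ((j:ℝ) + 1)) = 1 := by ring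
      rw [this]
      have e1' : projIcc 0 1 zero_le_one (1 : ℝ) = (1 : unitInterval) := by
        simp [projIcc]
      rw [e1']
      exact (Quot.sound ⟨j, x, rfl, rfl⟩).symm
    · have h1 : g s (j + 1) x r = Quot.mk _
          ⟨j + 1, (x, projIcc 0 1 zero_le_one ((j + 2 : ℝ) - r))⟩ := by
        simp only [g]
        exact if_neg h
      rw [h1]
      congr 3
      push_cast
      ring

lemma g_zero (j : ℕ) (x : A j) (x0 : A 0) [Subsingleton (A 0)] :
    g s j x 0 = Quot.mk _ ⟨0, (x0, 1)⟩ := by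
  induction j with
  | zero =>
    simp only [g]
    have : projIcc 0 1 zero_le_one ((1 : ℝ) - 0) = (1 : unitInterval) := by
      norm_num [projIcc]
    rw [this, Subsingleton.elim x x0]
  | succ j ih =>
    have h1 : g s (j + 1) x 0 = g s j (s j x) 0 := by
      simp only [g]
      exact if_pos (by positivity)
    rw [h1, ih]

lemma continuous_g (j : ℕ) : Continuous fun p : A j × ℝ => g s j p.1 p.2 := by
  induction j with
  | zero =>
    simp only [g]
    exact continuous_quot_mk.comp
      ((continuous_sigmaMk (σ := fun j => A j × unitInterval)).comp
        (continuous_fst.prodMk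
          (continuous_projIcc.comp (continuous_const.sub continuous_snd))))
  | succ j ih =>
    simp only [g]
    apply Continuous.if_le
    · exact ih.comp ((((s j).continuous).comp continuous_fst).prodMk continuous_snd)
    · exact continuous_quot_mk.comp
        ((continuous_sigmaMk (σ := fun j => A j × unitInterval)).comp
          (continuous_fst.prodMk
            (continuous_projIcc.comp (continuous_const.sub continuous_snd))))
    · exact continuous_snd
    · exact continuous_const
    · intro p hp
      rw [hp, g_eq s j (s j p.1) _ (by push_cast; linarith) (by push_cast; linarith)]
      have e0 : projIcc 0 1 zero_le_one ((j : ℝ) + 1 - ((j : ℝ) + 1)) = (0 : unitInterval) := by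
        simp [projIcc]
      have e1 : projIcc 0 1 zero_le_one ((j + 2 : ℝ) - ((j : ℝ) + 1)) = (1 : unitInterval) := by
        have : ((j:ℝ) + 2 - ((j:ℝ) + 1)) = 1 := by ring
        rw [this]
        simp [projIcc]
      rw [e0, e1]
      exact (Quot.sound ⟨j, p.1, rfl, rfl⟩).symm

/-- The contraction, curried. -/
noncomputable def Phi :
    C(Telescope (fun j => ⇑(s j)), C(unitInterval, Telescope (fun j => ⇑(s j)))) where
  toFun := Quot.lift
    (fun p : Σ j, A j × unitInterval =>
      ContinuousMap.mk
        (fun τ : unitInterval => g s p.1 p.2.1 ((1 - (τ : ℝ)) * ((p.1 : ℝ) + 1 - (p.2.2 : ℝ))))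
        (by
          exact (continuous_g s p.1).comp
            (continuous_const.prodMk
              ((continuous_const.sub continuous_subtype_val).mul continuous_const))))
    (by
      rintro a b ⟨j, x, rfl, rfl⟩
      ext τ
      simp only [ContinuousMap.coe_mk]
      have harg : (1 - (τ : ℝ)) * (((j + 1 : ℕ) : ℝ) + 1 - ((1 : unitInterval) : ℝ)) =
          (1 - (τ : ℝ)) * (((j : ℕ) : ℝ) + 1 - ((0 : unitInterval) : ℝ)) := by
        push_cast
        ring
      rw [harg]
      simp only [g]
      refine if_pos ?_
      have hτ1 : (τ : ℝ) ≤ 1 := τ.2.2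
      have hτ0 : (0 : ℝ) ≤ (τ : ℝ) := τ.2.1
      have h0 : ((0 : unitInterval) : ℝ) = 0 := rfl
      rw [h0]
      nlinarith [Nat.cast_nonneg (α := ℝ) j])
  continuous_toFun := by
    apply continuous_quot_lift
    apply continuous_sigma
    intro j
    apply ContinuousMap.continuous_of_continuous_uncurry
    show Continuous fun q : (A j × unitInterval) × unitInterval =>
      g s j q.1.1 ((1 - (q.2 : ℝ)) * ((j : ℝ) + 1 - (q.1.2 : ℝ)))
    exact (continuous_g s j).comp
      ((continuous_fst.fst).prodMk
        ((continuous_const.sub (continuous_subtype_val.comp continuous_snd)).mul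
          (continuous_const.sub
            (continuous_subtype_val.comp (continuous_fst.snd)))))

end TelescopeAux

/-- If `A 0` is a single point, then the infinite telescope of the maps `s_j` is
contractible. -/
theorem telescope_contractible (s : ∀ j, C(A (j + 1), A j))
    (h1 : Nonempty (A 0)) (h2 : Subsingleton (A 0)) :
    ContractibleSpace (Telescope fun j => s j) := by
  obtain ⟨x0⟩ := h1
  rw [contractible_iff_id_nullhomotopic]
  refine ⟨Quot.mk _ ⟨0, (x0, 1)⟩, ⟨?_⟩⟩
  refine ContinuousMap.Homotopy.mk ⟨fun q => TelescopeAux.Phi s q.2 q.1, ?_⟩ ?_ ?_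
  · have h := (TelescopeAux.Phi s).continuous_uncurry_of_continuous
    exact h.comp (continuous_snd.prodMk continuous_fst)
  · intro p
    induction p using Quot.ind with
    | _ p =>
      obtain ⟨j, x, t⟩ := p
      show (TelescopeAux.Phi s) (Quot.mk _ ⟨j, (x, t)⟩) 0 = Quot.mk _ ⟨j, (x, t)⟩
      simp only [TelescopeAux.Phi, ContinuousMap.coe_mk]
      show TelescopeAux.g s j x ((1 - ((0 : unitInterval) : ℝ)) * ((j : ℝ) + 1 - (t : ℝ))) =
        Quot.mk _ ⟨j, (x, t)⟩
      have h0 : ((0 : unitInterval) : ℝ) = 0 := rfl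
      rw [h0]
      have ht0 : (0 : ℝ) ≤ (t : ℝ) := t.2.1
      have ht1 : (t : ℝ) ≤ 1 := t.2.2
      rw [sub_zero, one_mul,
        TelescopeAux.g_eq s j x _ (by linarith) (by linarith)]
      have : (j : ℝ) + 1 - ((j : ℝ) + 1 - (t : ℝ)) = (t : ℝ) := by ring
      rw [this, projIcc_val zero_le_one t]
  · intro p
    induction p using Quot.ind with
    | _ p =>
      obtain ⟨j, x, t⟩ := p
      show (TelescopeAux.Phi s) (Quot.mk _ ⟨j, (x, t)⟩) 1 = Quot.mk _ ⟨0, (x0, 1)⟩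
      simp only [TelescopeAux.Phi, ContinuousMap.coe_mk]
      show TelescopeAux.g s j x ((1 - ((1 : unitInterval) : ℝ)) * ((j : ℝ) + 1 - (t : ℝ))) =
        Quot.mk _ ⟨0, (x0, 1)⟩
      have h0 : ((1 : unitInterval) : ℝ) = 1 := rfl
      rw [h0, sub_self, zero_mul, TelescopeAux.g_zero s j x x0]
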